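/- With τ₃,...,τ₆ on 𝔽₂⁶ as above, the 12-element set S = {001111, 001011, 001010, 001000, 001101, 001100, 000101, 000100, 000001, 000110, 000011, 000010} is a single orbit of the group generated by τ₃, τ₄, τ₅, τ₆. -/

import Mathlib

/-- For `n ∈ {3,4,5,6}` (0-indexed: `2,3,4,5`), the transvection
`τ_n : ξ_n ↦ ∑_{|k−n| ≤ 2} ξ_k` on `𝔽₂⁶`, fixing all other coordinates. -/
def tauG (n : Fin 6) : (Fin 6 → ZMod 2) → (Fin 6 → ZMod 2) :=
  fun ξ k => if k = n then
      ∑ j ∈ Finset.univ.filter (fun j : Fin 6 => ((j : ℤ) - (n : ℤ)).natAbs ≤ 2), ξ j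
    else ξ k

theorem tauG_involutive : ∀ n : Fin 6, ∀ x, tauG n (tauG n x) = x := by decide

def tauGPerm (n : Fin 6) : Equiv.Perm (Fin 6 → ZMod 2) :=
  Function.Involutive.toPerm (tauG n) (tauG_involutive n)

/-- The group generated by the transvections `τ₃, τ₄, τ₅, τ₆` (type `G₂`). -/
def GammaG2 : Subgroup (Equiv.Perm (Fin 6 → ZMod 2)) :=
  Subgroup.closure {tauGPerm 2, tauGPerm 3, tauGPerm 4, tauGPerm 5}

def inS : (Fin 6 → ZMod 2) → Prop := fun x =>
  x = ![0,0,1,1,1,1] ∨ x = ![0,0,1,0,1,1] ∨ x = ![0,0,1,0,1,0] ∨ x = ![0,0,1,0,0,0] ∨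
  x = ![0,0,1,1,0,1] ∨ x = ![0,0,1,1,0,0] ∨ x = ![0,0,0,1,0,1] ∨ x = ![0,0,0,1,0,0] ∨
  x = ![0,0,0,0,0,1] ∨ x = ![0,0,0,1,1,0] ∨ x = ![0,0,0,0,1,1] ∨ x = ![0,0,0,0,1,0]

instance : DecidablePred inS := fun x => by unfold inS; infer_instance

lemma gen_pres : ∀ n ∈ ({2,3,4,5} : Set (Fin 6)), ∀ x, inS x → inS (tauGPerm n x) := by
  decide

lemma closure_pres : ∀ g ∈ GammaG2, ∀ x, inS x → inS (g x) := by
  intro g hg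
  refine Subgroup.closure_induction
    (p := fun g _ => (∀ x, inS x → inS (g x)) ∧ (∀ x, inS x → inS (g⁻¹ x))) ?_ ?_ ?_ ?_ hg
      |>.1
  · intro t ht
    have ht' : t = tauGPerm 2 ∨ t = tauGPerm 3 ∨ t = tauGPerm 4 ∨ t = tauGPerm 5 := by
      simpa [Set.mem_insert_iff] using ht
    have hinv : t⁻¹ = t := by
      rcases ht' with rfl | rfl | rfl | rfl <;> rfl
    have hpres : ∀ x, inS x → inS (t x) := by
      rcases ht' with rfl | rfl | rfl | rfl <;> exact gen_pres _ (by simp)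
    exact ⟨hpres, by rw [hinv]; exact hpres⟩
  · exact ⟨fun x hx => hx, fun x hx => hx⟩
  · intro a b _ _ ha hb
    exact ⟨fun x hx => ha.1 _ (hb.1 x hx), fun x hx => hb.2 _ (ha.2 x hx)⟩
  · intro a _ ha
    exact ⟨ha.2, by simpa using ha.1⟩

/-- The `12`-element set
`{001111, 001011, 001010, 001000, 001101, 001100, 000101, 000100, 000001, 000110, 000011, 000010}`
(bit strings `ξ₁…ξ₆`) is a single orbit of `⟨τ₃, τ₄, τ₅, τ₆⟩` on `𝔽₂⁶`. -/
theorem GammaG2_twelve_element_orbit :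
    MulAction.orbit GammaG2 (![0,0,1,1,1,1] : Fin 6 → ZMod 2) =
      { ![0,0,1,1,1,1], ![0,0,1,0,1,1], ![0,0,1,0,1,0], ![0,0,1,0,0,0],
        ![0,0,1,1,0,1], ![0,0,1,1,0,0], ![0,0,0,1,0,1], ![0,0,0,1,0,0],
        ![0,0,0,0,0,1], ![0,0,0,1,1,0], ![0,0,0,0,1,1], ![0,0,0,0,1,0] } := by
  have h2 : tauGPerm 2 ∈ GammaG2 := Subgroup.subset_closure (by simp)
  have h3 : tauGPerm 3 ∈ GammaG2 := Subgroup.subset_closure (by simp)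
  have h4 : tauGPerm 4 ∈ GammaG2 := Subgroup.subset_closure (by simp)
  have h5 : tauGPerm 5 ∈ GammaG2 := Subgroup.subset_closure (by simp)
  have key : ∀ g, g ∈ GammaG2 → ∀ y, g ![0,0,1,1,1,1] = y →
      y ∈ MulAction.orbit GammaG2 (![0,0,1,1,1,1] : Fin 6 → ZMod 2) :=
    fun g hg y h => ⟨⟨g, hg⟩, h⟩
  ext x
  constructor
  · rintro ⟨⟨g, hg⟩, rfl⟩
    have : inS (g ![0,0,1,1,1,1]) := closure_pres g hg _ (by decide)
    have hmem : ∀ y, inS y → y ∈ ({ ![0,0,1,1,1,1], ![0,0,1,0,1,1], ![0,0,1,0,1,0],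
        ![0,0,1,0,0,0], ![0,0,1,1,0,1], ![0,0,1,1,0,0], ![0,0,0,1,0,1], ![0,0,0,1,0,0],
        ![0,0,0,0,0,1], ![0,0,0,1,1,0], ![0,0,0,0,1,1], ![0,0,0,0,1,0] } :
          Set (Fin 6 → ZMod 2)) := by
      intro y hy
      simpa [inS, Set.mem_insert_iff, Set.mem_singleton_iff] using hy
    exact hmem _ this
  · intro hx
    simp only [Set.mem_insert_iff, Set.mem_singleton_iff] at hx
    rcases hx with rfl | rfl | rfl | rfl | rfl | rfl | rfl | rfl | rfl | rfl | rfl | rfl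
    · exact key 1 (one_mem _) _ (by decide)
    · exact key (tauGPerm 3) (h3) _ (by decide)
    · exact key (tauGPerm 5 * tauGPerm 3) (mul_mem h5 h3) _ (by decide)
    · exact key (tauGPerm 4 * tauGPerm 5 * tauGPerm 3) (mul_mem (mul_mem h4 h5) h3) _ (by decide)
    · exact key (tauGPerm 4) (h4) _ (by decide)
    · exact key (tauGPerm 5 * tauGPerm 4) (mul_mem h5 h4) _ (by decide)
    · exact key (tauGPerm 2 * tauGPerm 4) (mul_mem h2 h4) _ (by decide)
    · exact key (tauGPerm 5 * tauGPerm 2 * tauGPerm 4) (mul_mem (mul_mem h5 h2) h4) _ (by decide)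
    · exact key (tauGPerm 4 * tauGPerm 2 * tauGPerm 3) (mul_mem (mul_mem h4 h2) h3) _ (by decide)
    · exact key (tauGPerm 3 * tauGPerm 5 * tauGPerm 2 * tauGPerm 3)
        (mul_mem (mul_mem (mul_mem h3 h5) h2) h3) _ (by decide)
    · exact key (tauGPerm 2 * tauGPerm 3) (mul_mem h2 h3) _ (by decide)
    · exact key (tauGPerm 5 * tauGPerm 2 * tauGPerm 3) (mul_mem (mul_mem h5 h2) h3) _ (by decide)
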